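/- Let φ be a satisfiable propositional formula on x₁,…,xₙ whose M-evaluation coincides, under every M-valuation, with the M-evaluation of its Blake canonical form B(φ), the disjunction of all prime implicants of the Boolean function of φ. Then for every propositional formula ψ that is binary-equivalent to φ and for every M-valuation v, |⟦φ⟧_v| ≥ |⟦ψ⟧_v|. -/

import Mathlib

/-- Propositional formulas over `n` variables, built from `¬`, `∧`, `∨`. -/
inductive PropForm (n : ℕ) : Type where
  | var : Fin n → PropForm n
  | neg : PropForm n → PropForm n
  | conj : PropForm n → PropForm n → PropForm n
  | disj : PropForm n → PropForm n → PropForm n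

namespace PropForm

/-- The multiple-valued semantics `M` over the integers:
`∧` is `min`, `∨` is `max`, `¬` is integer negation. -/
def evalM {n : ℕ} (v : Fin n → ℤ) : PropForm n → ℤ
  | var i => v i
  | neg φ => -(evalM v φ)
  | conj φ ψ => min (evalM v φ) (evalM v ψ)
  | disj φ ψ => max (evalM v φ) (evalM v ψ)

/-- The binary semantics `B₂` over `Bool`. -/
def evalB {n : ℕ} (b : Fin n → Bool) : PropForm n → Bool
  | var i => b i
  | neg φ => !(evalB b φ)
  | conj φ ψ => evalB b φ && evalB b ψ
  | disj φ ψ => evalB b φ || evalB b ψ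

end PropForm

/-- A literal: a variable together with a polarity (`true` = positive). -/
abbrev Lit (n : ℕ) := Fin n × Bool

/-- `M`-value of a literal under a valuation. -/
def litValM {n : ℕ} (v : Fin n → ℤ) (l : Lit n) : ℤ :=
  if l.2 then v l.1 else -(v l.1)

/-- Binary value of a literal under a binary valuation. -/
def litValB {n : ℕ} (b : Fin n → Bool) (l : Lit n) : Bool :=
  if l.2 then b l.1 else !(b l.1)

/-- `M`-value of a conjunctive term (a list of literals), the minimum of the
literal values (for nonempty terms; the value on `[]` is a dummy). -/
def Term.evalM {n : ℕ} (v : Fin n → ℤ) : List (Lit n) → ℤ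
  | [] => 0
  | [l] => litValM v l
  | l :: ls => min (litValM v l) (Term.evalM v ls)

/-- Binary value of a conjunctive term: the conjunction of its literal values. -/
def Term.evalB {n : ℕ} (b : Fin n → Bool) (t : List (Lit n)) : Bool :=
  t.all (litValB b)

/-- `M`-value of a DNF (a list of conjunctive terms), the maximum of the
term values (for nonempty DNFs; the value on `[]` is a dummy). -/
def DNF.evalM {n : ℕ} (v : Fin n → ℤ) : List (List (Lit n)) → ℤ
  | [] => 0
  | [t] => Term.evalM v t
  | t :: ts => max (Term.evalM v t) (DNF.evalM v ts)

/-- A term is contradictory if it contains both `x` and `¬x` for some variable. -/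
def Contra {n : ℕ} (t : List (Lit n)) : Prop :=
  ∃ i : Fin n, ((i, true) : Lit n) ∈ t ∧ ((i, false) : Lit n) ∈ t

/-- A conjunctive term over distinct variables which is a binary implicant of `φ`. -/
def IsImplicant {n : ℕ} (t : List (Lit n)) (φ : PropForm n) : Prop :=
  t ≠ [] ∧ (t.map Prod.fst).Nodup ∧
    ∀ b : Fin n → Bool, Term.evalB b t = true → PropForm.evalB b φ = true

/-- A prime implicant: an implicant none of whose proper subterms is an implicant. -/
def IsPrimeImplicant {n : ℕ} (t : List (Lit n)) (φ : PropForm n) : Prop :=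
  IsImplicant t φ ∧
    ∀ s : List (Lit n), s.toFinset ⊂ t.toFinset → ¬ IsImplicant s φ

section Aux
variable {n : ℕ}

lemma term_cons (v : Fin n → ℤ) (l : Lit n) {ls : List (Lit n)} (h : ls ≠ []) :
    Term.evalM v (l :: ls) = min (litValM v l) (Term.evalM v ls) := by
  cases ls with
  | nil => exact absurd rfl h
  | cons a as => rfl

lemma term_le (v : Fin n → ℤ) {t : List (Lit n)} {l : Lit n} (hl : l ∈ t) :
    Term.evalM v t ≤ litValM v l := by
  induction t with
  | nil => simp at hl
  | cons a as ih =>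
    cases as with
    | nil =>
      simp only [List.mem_singleton] at hl; subst hl; exact le_refl _
    | cons b bs =>
      rw [term_cons v a (by simp)]
      rcases List.mem_cons.mp hl with h | h
      · subst h; exact min_le_left _ _
      · exact le_trans (min_le_right _ _) (ih h)

lemma term_attained (v : Fin n → ℤ) {t : List (Lit n)} (ht : t ≠ []) :
    ∃ l ∈ t, Term.evalM v t = litValM v l := by
  induction t with
  | nil => exact absurd rfl ht
  | cons a as ih =>
    cases as with
    | nil => exact ⟨a, by simp, rfl⟩
    | cons b bs =>
      obtain ⟨l, hl, hval⟩ := ih (by simp)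
      rw [term_cons v a (by simp)]
      rcases le_total (litValM v a) (Term.evalM v (b :: bs)) with h | h
      · exact ⟨a, by simp, by rw [min_eq_left h]⟩
      · exact ⟨l, List.mem_cons_of_mem _ hl, by rw [min_eq_right h, hval]⟩

lemma term_mono (v : Fin n → ℤ) {s t : List (Lit n)} (hs : s ≠ [])
    (hsub : ∀ l ∈ s, l ∈ t) : Term.evalM v t ≤ Term.evalM v s := by
  obtain ⟨l, hl, hval⟩ := term_attained v hs
  rw [hval]; exact term_le v (hsub l hl)

lemma term_congr (v : Fin n → ℤ) {s t : List (Lit n)} (hs : s ≠ []) (ht : t ≠ [])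
    (h : ∀ l, l ∈ s ↔ l ∈ t) : Term.evalM v s = Term.evalM v t :=
  le_antisymm (term_mono v ht (fun l hl => (h l).mpr hl))
    (term_mono v hs (fun l hl => (h l).mp hl))

lemma term_append (v : Fin n → ℤ) {t₁ t₂ : List (Lit n)} (h₁ : t₁ ≠ []) (h₂ : t₂ ≠ []) :
    min (Term.evalM v t₁) (Term.evalM v t₂) ≤ Term.evalM v (t₁ ++ t₂) := by
  obtain ⟨l, hl, hval⟩ := term_attained v (t := t₁ ++ t₂) (by simp [h₁])
  rw [hval]
  rcases List.mem_append.mp hl with h | h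
  · exact le_trans (min_le_left _ _) (term_le v h)
  · exact le_trans (min_le_right _ _) (term_le v h)

lemma dnf_cons (v : Fin n → ℤ) (t : List (Lit n)) {ts : List (List (Lit n))} (h : ts ≠ []) :
    DNF.evalM v (t :: ts) = max (Term.evalM v t) (DNF.evalM v ts) := by
  cases ts with
  | nil => exact absurd rfl h
  | cons a as => rfl

lemma dnf_le (v : Fin n → ℤ) {B : List (List (Lit n))} {t : List (Lit n)} (ht : t ∈ B) :
    Term.evalM v t ≤ DNF.evalM v B := by
  induction B with
  | nil => simp at ht
  | cons a as ih =>
    cases as with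
    | nil => simp only [List.mem_singleton] at ht; subst ht; exact le_refl _
    | cons b bs =>
      rw [dnf_cons v a (by simp)]
      rcases List.mem_cons.mp ht with h | h
      · subst h; exact le_max_left _ _
      · exact le_trans (ih h) (le_max_right _ _)

lemma dnf_attained (v : Fin n → ℤ) {B : List (List (Lit n))} (hB : B ≠ []) :
    ∃ t ∈ B, DNF.evalM v B = Term.evalM v t := by
  induction B with
  | nil => exact absurd rfl hB
  | cons a as ih =>
    cases as with
    | nil => exact ⟨a, by simp, rfl⟩
    | cons b bs =>
      obtain ⟨t, htm, hval⟩ := ih (by simp)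
      rw [dnf_cons v a (by simp)]
      rcases le_total (Term.evalM v a) (DNF.evalM v (b :: bs)) with h | h
      · exact ⟨t, List.mem_cons_of_mem _ htm, by rw [max_eq_right h, hval]⟩
      · exact ⟨a, by simp, by rw [max_eq_left h]⟩

end Aux
section Aux2
variable {n : ℕ}

/-- The sign valuation of `v`. -/
def sgnv (v : Fin n → ℤ) : Fin n → Bool := fun i => decide (0 < v i)

lemma lit_sign (v : Fin n → ℤ) (hv : ∀ i, v i ≠ 0) (l : Lit n) :
    litValM v l ≠ 0 ∧ (litValB (sgnv v) l = true ↔ 0 < litValM v l) := by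
  obtain ⟨i, p⟩ := l
  have := hv i
  cases p <;> simp [litValM, litValB, sgnv] <;> omega

lemma lit_neg_M (v : Fin n → ℤ) (l : Lit n) :
    litValM v (l.1, !l.2) = -litValM v l := by
  obtain ⟨i, p⟩ := l; cases p <;> simp [litValM]

lemma sign_lemma (v : Fin n → ℤ) (hv : ∀ i, v i ≠ 0) (ψ : PropForm n) :
    PropForm.evalM v ψ ≠ 0 ∧
      (0 < PropForm.evalM v ψ ↔ PropForm.evalB (sgnv v) ψ = true) := by
  induction ψ with
  | var i =>
    refine ⟨hv i, ?_⟩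
    simp [PropForm.evalM, PropForm.evalB, sgnv]
  | neg φ ih =>
    obtain ⟨h0, hiff⟩ := ih
    refine ⟨by simp [PropForm.evalM]; omega, ?_⟩
    simp only [PropForm.evalM, PropForm.evalB, Bool.not_eq_true', ← Bool.not_eq_true]
    rw [← hiff]; omega
  | conj φ₁ φ₂ ih₁ ih₂ =>
    obtain ⟨h1, hf1⟩ := ih₁; obtain ⟨h2, hf2⟩ := ih₂
    constructor
    · simp only [PropForm.evalM]
      rcases min_choice (PropForm.evalM v φ₁) (PropForm.evalM v φ₂) with h | h <;>
        rw [h] <;> assumption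
    · simp only [PropForm.evalM, PropForm.evalB, lt_min_iff, Bool.and_eq_true, hf1, hf2]
  | disj φ₁ φ₂ ih₁ ih₂ =>
    obtain ⟨h1, hf1⟩ := ih₁; obtain ⟨h2, hf2⟩ := ih₂
    constructor
    · simp only [PropForm.evalM]
      rcases max_choice (PropForm.evalM v φ₁) (PropForm.evalM v φ₂) with h | h <;>
        rw [h] <;> assumption
    · simp only [PropForm.evalM, PropForm.evalB, lt_max_iff, Bool.or_eq_true, hf1, hf2]

lemma term_evalB_iff (b : Fin n → Bool) (t : List (Lit n)) :
    Term.evalB b t = true ↔ ∀ l ∈ t, litValB b l = true := by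
  simp [Term.evalB, List.all_eq_true]

end Aux2
section Aux3
variable {n : ℕ}

lemma key (v : Fin n → ℤ) (hv : ∀ i, v i ≠ 0) (ψ : PropForm n) :
    (PropForm.evalB (sgnv v) ψ = true → ∃ t : List (Lit n), t ≠ [] ∧
      (∀ l ∈ t, litValB (sgnv v) l = true) ∧
      PropForm.evalM v ψ ≤ Term.evalM v t ∧
      ∀ b' : Fin n → Bool, Term.evalB b' t = true → PropForm.evalB b' ψ = true) ∧
    (PropForm.evalB (sgnv v) ψ = false → ∃ t : List (Lit n), t ≠ [] ∧
      (∀ l ∈ t, litValB (sgnv v) l = true) ∧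
      -PropForm.evalM v ψ ≤ Term.evalM v t ∧
      ∀ b' : Fin n → Bool, Term.evalB b' t = true → PropForm.evalB b' ψ = false) := by
  induction ψ with
  | var i =>
    constructor
    · intro hb
      refine ⟨[(i, true)], by simp, ?_, ?_, ?_⟩
      · intro l hl; simp only [List.mem_singleton] at hl; subst hl
        simpa [litValB, PropForm.evalB] using hb
      · simp [PropForm.evalM, Term.evalM, litValM]
      · intro b' hb'
        rw [term_evalB_iff] at hb'
        have := hb' (i, true) (by simp)
        simpa [litValB, PropForm.evalB] using this
    · intro hb
      refine ⟨[(i, false)], by simp, ?_, ?_, ?_⟩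
      · intro l hl; simp only [List.mem_singleton] at hl; subst hl
        simp only [PropForm.evalB] at hb
        simp [litValB, hb]
      · simp [PropForm.evalM, Term.evalM, litValM]
      · intro b' hb'
        rw [term_evalB_iff] at hb'
        have := hb' (i, false) (by simp)
        simp only [litValB, if_neg (by simp : ¬(false = true))] at this
        simp only [PropForm.evalB, ← Bool.not_eq_true]
        simpa using this
  | neg φ ih =>
    obtain ⟨ihT, ihF⟩ := ih
    constructor
    · intro hb
      have hb : PropForm.evalB (sgnv v) φ = false := by
        simpa [PropForm.evalB, Bool.not_eq_true'] using hb
      obtain ⟨t, h1, h2, h3, h4⟩ := ihF hb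
      refine ⟨t, h1, h2, h3, fun b' hb' => ?_⟩
      simp [PropForm.evalB, h4 b' hb']
    · intro hb
      have hb : PropForm.evalB (sgnv v) φ = true := by
        simpa [PropForm.evalB, Bool.not_eq_false'] using hb
      obtain ⟨t, h1, h2, h3, h4⟩ := ihT hb
      refine ⟨t, h1, h2, by simpa [PropForm.evalM] using h3, fun b' hb' => ?_⟩
      simp [PropForm.evalB, h4 b' hb']
  | conj φ₁ φ₂ ih₁ ih₂ =>
    obtain ⟨ih₁T, ih₁F⟩ := ih₁; obtain ⟨ih₂T, ih₂F⟩ := ih₂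
    constructor
    · intro hb
      simp only [PropForm.evalB, Bool.and_eq_true] at hb
      obtain ⟨t₁, h11, h12, h13, h14⟩ := ih₁T hb.1
      obtain ⟨t₂, h21, h22, h23, h24⟩ := ih₂T hb.2
      refine ⟨t₁ ++ t₂, by simp [h11], ?_, ?_, ?_⟩
      · intro l hl; rcases List.mem_append.mp hl with h | h
        · exact h12 l h
        · exact h22 l h
      · refine le_trans ?_ (term_append v h11 h21)
        simp only [PropForm.evalM]
        exact min_le_min h13 h23
      · intro b' hb'
        rw [term_evalB_iff] at hb'
        have hb1 : Term.evalB b' t₁ = true := by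
          rw [term_evalB_iff]; exact fun l hl => hb' l (List.mem_append.mpr (Or.inl hl))
        have hb2 : Term.evalB b' t₂ = true := by
          rw [term_evalB_iff]; exact fun l hl => hb' l (List.mem_append.mpr (Or.inr hl))
        simp [PropForm.evalB, h14 b' hb1, h24 b' hb2]
    · intro hb
      simp only [PropForm.evalB, Bool.and_eq_false_iff] at hb
      -- either φ₁ false with evalM φ₁ ≤ evalM φ₂, or symmetric
      have hcases : (PropForm.evalB (sgnv v) φ₁ = false ∧
            PropForm.evalM v φ₁ ≤ PropForm.evalM v φ₂) ∨
          (PropForm.evalB (sgnv v) φ₂ = false ∧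
            PropForm.evalM v φ₂ ≤ PropForm.evalM v φ₁) := by
        obtain ⟨hn1, hs1⟩ := sign_lemma v hv φ₁
        obtain ⟨hn2, hs2⟩ := sign_lemma v hv φ₂
        rcases hb with h | h
        · rcases le_total (PropForm.evalM v φ₁) (PropForm.evalM v φ₂) with hle | hle
          · exact Or.inl ⟨h, hle⟩
          · refine Or.inr ⟨?_, hle⟩
            have : ¬ (0 < PropForm.evalM v φ₁) := by rw [hs1]; simp [h]
            have : ¬ (0 < PropForm.evalM v φ₂) := by omega
            rw [← Bool.not_eq_true, ← hs2]; exact this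
        · rcases le_total (PropForm.evalM v φ₂) (PropForm.evalM v φ₁) with hle | hle
          · exact Or.inr ⟨h, hle⟩
          · refine Or.inl ⟨?_, hle⟩
            have : ¬ (0 < PropForm.evalM v φ₂) := by rw [hs2]; simp [h]
            have : ¬ (0 < PropForm.evalM v φ₁) := by omega
            rw [← Bool.not_eq_true, ← hs1]; exact this
      rcases hcases with ⟨hf, hle⟩ | ⟨hf, hle⟩
      · obtain ⟨t, h1, h2, h3, h4⟩ := ih₁F hf
        refine ⟨t, h1, h2, ?_, fun b' hb' => ?_⟩
        · refine le_trans ?_ h3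
          simp only [PropForm.evalM, min_eq_left hle]
          exact le_refl _
        · simp [PropForm.evalB, h4 b' hb']
      · obtain ⟨t, h1, h2, h3, h4⟩ := ih₂F hf
        refine ⟨t, h1, h2, ?_, fun b' hb' => ?_⟩
        · refine le_trans ?_ h3
          simp only [PropForm.evalM, min_eq_right hle]
          exact le_refl _
        · simp [PropForm.evalB, h4 b' hb']
  | disj φ₁ φ₂ ih₁ ih₂ =>
    obtain ⟨ih₁T, ih₁F⟩ := ih₁; obtain ⟨ih₂T, ih₂F⟩ := ih₂
    constructor
    · intro hb
      simp only [PropForm.evalB, Bool.or_eq_true] at hb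
      have hcases : (PropForm.evalB (sgnv v) φ₁ = true ∧
            PropForm.evalM v φ₂ ≤ PropForm.evalM v φ₁) ∨
          (PropForm.evalB (sgnv v) φ₂ = true ∧
            PropForm.evalM v φ₁ ≤ PropForm.evalM v φ₂) := by
        obtain ⟨hn1, hs1⟩ := sign_lemma v hv φ₁
        obtain ⟨hn2, hs2⟩ := sign_lemma v hv φ₂
        rcases hb with h | h
        · rcases le_total (PropForm.evalM v φ₂) (PropForm.evalM v φ₁) with hle | hle
          · exact Or.inl ⟨h, hle⟩
          · refine Or.inr ⟨?_, hle⟩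
            have h1 : 0 < PropForm.evalM v φ₁ := hs1.mpr h
            rw [← hs2]; omega
        · rcases le_total (PropForm.evalM v φ₁) (PropForm.evalM v φ₂) with hle | hle
          · exact Or.inr ⟨h, hle⟩
          · refine Or.inl ⟨?_, hle⟩
            have h2 : 0 < PropForm.evalM v φ₂ := hs2.mpr h
            rw [← hs1]; omega
      rcases hcases with ⟨hf, hle⟩ | ⟨hf, hle⟩
      · obtain ⟨t, h1, h2, h3, h4⟩ := ih₁T hf
        refine ⟨t, h1, h2, ?_, fun b' hb' => ?_⟩
        · refine le_trans ?_ h3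
          simp only [PropForm.evalM, max_eq_left hle]
          exact le_refl _
        · simp [PropForm.evalB, h4 b' hb']
      · obtain ⟨t, h1, h2, h3, h4⟩ := ih₂T hf
        refine ⟨t, h1, h2, ?_, fun b' hb' => ?_⟩
        · refine le_trans ?_ h3
          simp only [PropForm.evalM, max_eq_right hle]
          exact le_refl _
        · simp [PropForm.evalB, h4 b' hb']
    · intro hb
      simp only [PropForm.evalB, Bool.or_eq_false_iff] at hb
      obtain ⟨t₁, h11, h12, h13, h14⟩ := ih₁F hb.1
      obtain ⟨t₂, h21, h22, h23, h24⟩ := ih₂F hb.2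
      refine ⟨t₁ ++ t₂, by simp [h11], ?_, ?_, ?_⟩
      · intro l hl; rcases List.mem_append.mp hl with h | h
        · exact h12 l h
        · exact h22 l h
      · refine le_trans ?_ (term_append v h11 h21)
        simp only [PropForm.evalM]
        rw [← min_neg_neg]
        exact min_le_min h13 h23
      · intro b' hb'
        rw [term_evalB_iff] at hb'
        have hb1 : Term.evalB b' t₁ = true := by
          rw [term_evalB_iff]; exact fun l hl => hb' l (List.mem_append.mpr (Or.inl hl))
        have hb2 : Term.evalB b' t₂ = true := by
          rw [term_evalB_iff]; exact fun l hl => hb' l (List.mem_append.mpr (Or.inr hl))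
        simp [PropForm.evalB, h14 b' hb1, h24 b' hb2]

end Aux3
section Aux4
variable {n : ℕ}

lemma exists_prime_subset (φ : PropForm n) :
    ∀ k (t : List (Lit n)), t.toFinset.card ≤ k → IsImplicant t φ →
      ∃ s, IsPrimeImplicant s φ ∧ s.toFinset ⊆ t.toFinset := by
  intro k
  induction k with
  | zero =>
    intro t hcard ht
    obtain ⟨hne, -, -⟩ := ht
    cases t with
    | nil => exact absurd rfl hne
    | cons a as =>
      exfalso
      have : a ∈ (a :: as).toFinset := by simp
      have := Finset.card_pos.mpr ⟨a, this⟩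
      omega
  | succ k ih =>
    intro t hcard ht
    by_cases hp : ∀ s : List (Lit n), s.toFinset ⊂ t.toFinset → ¬ IsImplicant s φ
    · exact ⟨t, ⟨ht, hp⟩, subset_rfl⟩
    · push_neg at hp
      obtain ⟨s, hss, hs⟩ := hp
      have hlt := Finset.card_lt_card hss
      obtain ⟨p, hprime, hsub⟩ := ih s (by omega) hs
      exact ⟨p, hprime, hsub.trans hss.subset⟩

lemma fst_unique : ∀ {t : List (Lit n)}, (t.map Prod.fst).Nodup →
    ∀ {i : Fin n} {p q : Bool}, (i, p) ∈ t → (i, q) ∈ t → p = q := by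
  intro t
  induction t with
  | nil => simp
  | cons a as ih =>
    intro hnd i p q hp hq
    rw [List.map_cons, List.nodup_cons] at hnd
    rcases List.mem_cons.mp hp with h | h <;> rcases List.mem_cons.mp hq with h' | h'
    · rw [← h] at h'
      have := congrArg Prod.snd h'
      simpa using this.symm
    · exfalso; exact hnd.1 (List.mem_map.mpr ⟨(i, q), h', by rw [← h]⟩)
    · exfalso; exact hnd.1 (List.mem_map.mpr ⟨(i, p), h, by rw [← h']⟩)
    · exact ih hnd.2 h h'

/-- Override `b` by the polarities prescribed in `t`. -/
def override (b : Fin n → Bool) (t : List (Lit n)) : Fin n → Bool :=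
  fun i => if ((i, true) : Lit n) ∈ t then true
    else if ((i, false) : Lit n) ∈ t then false else b i

lemma override_self (b : Fin n → Bool) {t : List (Lit n)}
    (hnd : (t.map Prod.fst).Nodup) : Term.evalB (override b t) t = true := by
  rw [term_evalB_iff]
  rintro ⟨i, p⟩ hl
  cases p
  · have hnt : ((i, true) : Lit n) ∉ t := fun h => by
      simpa using fst_unique hnd h hl
    simp [litValB, override, hnt, hl]
  · simp [litValB, override, hl]

lemma override_other (b : Fin n → Bool) {t s : List (Lit n)}
    (hnd : (t.map Prod.fst).Nodup)
    (hs : ∀ l ∈ s, litValB b l = true)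
    (hclash : ∀ l ∈ t, ((l.1, !l.2) : Lit n) ∉ s) :
    Term.evalB (override b t) s = true := by
  rw [term_evalB_iff]
  rintro ⟨i, p⟩ hl
  by_cases h1 : ((i, true) : Lit n) ∈ t
  · have hp : p = true := by
      by_contra hq
      rw [Bool.not_eq_true] at hq; subst hq
      exact hclash (i, true) h1 (by simpa using hl)
    subst hp
    simp [litValB, override, h1]
  · by_cases h2 : ((i, false) : Lit n) ∈ t
    · have hp : p = false := by
        by_contra hq
        rw [Bool.not_eq_false] at hq; subst hq
        exact hclash (i, false) h2 (by simpa using hl)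
      subst hp
      simp [litValB, override, h1, h2]
    · have := hs (i, p) hl
      simpa [litValB, override, h1, h2] using this

lemma clash_lemma (φ : PropForm n) (b : Fin n → Bool) (t s : List (Lit n))
    (hnd : (t.map Prod.fst).Nodup)
    (himpt : ∀ b', Term.evalB b' t = true → PropForm.evalB b' φ = true)
    (hs : ∀ l ∈ s, litValB b l = true)
    (himps : ∀ b', Term.evalB b' s = true → PropForm.evalB b' φ = false) :
    ∃ l ∈ t, ((l.1, !l.2) : Lit n) ∈ s := by
  by_contra h
  push_neg at h
  have h1 := himpt (override b t) (override_self b hnd)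
  have h2 := himps (override b t) (override_other b hnd hs h)
  rw [h1] at h2
  simp at h2
end Aux4
lemma lit_true_eq {n : ℕ} (b : Fin n → Bool) {i : Fin n} {p q : Bool}
    (hp : litValB b (i, p) = true) (hq : litValB b (i, q) = true) : p = q := by
  cases p <;> cases q <;> simp [litValB] at hp hq <;> simp_all

/-- if the `M`-evaluation of a satisfiable `φ` coincides with that of
its Blake canonical form `B(φ)` (a DNF whose terms are prime implicants of `φ` and
which contains every prime implicant of `φ`), then `|⟦φ⟧ᵥ| ≥ |⟦ψ⟧ᵥ|` for every `ψ`
binary-equivalent to `φ` and every `M`-valuation `v`. -/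
theorem abs_ge_of_BCF {n : ℕ} (φ : PropForm n)
    (hsat : ∃ b : Fin n → Bool, PropForm.evalB b φ = true)
    (B : List (List (Lit n)))
    (hBprime : ∀ t ∈ B, IsPrimeImplicant t φ)
    (hBall : ∀ t : List (Lit n), IsPrimeImplicant t φ → ∃ t' ∈ B, t'.toFinset = t.toFinset)
    (hBeq : ∀ v : Fin n → ℤ, (∀ i, v i ≠ 0) → PropForm.evalM v φ = DNF.evalM v B) :
    ∀ ψ : PropForm n, (∀ b : Fin n → Bool, PropForm.evalB b φ = PropForm.evalB b ψ) →
      ∀ v : Fin n → ℤ, (∀ i, v i ≠ 0) →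
        |PropForm.evalM v ψ| ≤ |PropForm.evalM v φ| := by
  intro ψ hψ v hv
  obtain ⟨hφ0, hφs⟩ := sign_lemma v hv φ
  obtain ⟨hψ0, hψs⟩ := sign_lemma v hv ψ
  have hBeqv := hBeq v hv
  cases hcase : PropForm.evalB (sgnv v) φ with
  | true =>
    have hψT : PropForm.evalB (sgnv v) ψ = true := by rw [← hψ]; exact hcase
    obtain ⟨t, ht1, ht2, ht3, ht4⟩ := (key v hv ψ).1 hψT
    have ht'ne : t.dedup ≠ [] := by
      simpa [List.dedup_eq_nil] using ht1
    have hmem : ∀ l : Lit n, l ∈ t.dedup ↔ l ∈ t := fun l => List.mem_dedup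
    have hnd : (t.dedup.map Prod.fst).Nodup := by
      refine List.Nodup.map_on ?_ (List.nodup_dedup t)
      rintro ⟨i, p⟩ hx ⟨j, q⟩ hy hfst
      simp only at hfst
      subst hfst
      have hp := ht2 _ ((hmem _).mp hx)
      have hq := ht2 _ ((hmem _).mp hy)
      rw [lit_true_eq (sgnv v) hp hq]
    have himpl : IsImplicant t.dedup φ := by
      refine ⟨ht'ne, hnd, fun b' hb' => ?_⟩
      rw [hψ b']
      refine ht4 b' ?_
      rw [term_evalB_iff] at hb' ⊢
      exact fun l hl => hb' l ((hmem l).mpr hl)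
    obtain ⟨p, hp, hpsub⟩ := exists_prime_subset φ (t.dedup.toFinset.card) t.dedup le_rfl himpl
    obtain ⟨t'', ht''B, ht''eq⟩ := hBall p hp
    have hpne : p ≠ [] := hp.1.1
    have ht''ne : t'' ≠ [] := (hBprime t'' ht''B).1.1
    have e1 : Term.evalM v t = Term.evalM v t.dedup :=
      term_congr v ht1 ht'ne (fun l => (hmem l).symm)
    have e2 : Term.evalM v t.dedup ≤ Term.evalM v p :=
      term_mono v hpne (fun l hl =>
        List.mem_toFinset.mp (hpsub (List.mem_toFinset.mpr hl)))
    have e3 : Term.evalM v p = Term.evalM v t'' :=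
      term_congr v hpne ht''ne (fun l => by
        rw [← List.mem_toFinset, ← List.mem_toFinset, ht''eq])
    have e4 : Term.evalM v t'' ≤ DNF.evalM v B := dnf_le v ht''B
    have hchain : PropForm.evalM v ψ ≤ PropForm.evalM v φ := by
      rw [hBeqv]
      calc PropForm.evalM v ψ ≤ Term.evalM v t := ht3
        _ = Term.evalM v t.dedup := e1
        _ ≤ Term.evalM v p := e2
        _ = Term.evalM v t'' := e3
        _ ≤ DNF.evalM v B := e4
    have hψpos : 0 < PropForm.evalM v ψ := hψs.mpr hψT
    rw [abs_of_pos hψpos, abs_of_pos (lt_of_lt_of_le hψpos hchain)]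
    exact hchain
  | false =>
    have hψF : PropForm.evalB (sgnv v) ψ = false := by rw [← hψ]; exact hcase
    obtain ⟨s, hs1, hs2, hs3, hs4⟩ := (key v hv ψ).2 hψF
    have hBne : B ≠ [] := by
      intro h
      rw [h] at hBeqv
      exact hφ0 (by simpa [DNF.evalM] using hBeqv)
    obtain ⟨t, htB, hattain⟩ := dnf_attained v hBne
    obtain ⟨⟨htne, htnd, htimp⟩, -⟩ := hBprime t htB
    have himps : ∀ b', Term.evalB b' s = true → PropForm.evalB b' φ = false :=
      fun b' hb' => by rw [hψ b']; exact hs4 b' hb'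
    obtain ⟨l, hlt, hls⟩ := clash_lemma φ (sgnv v) t s htnd htimp hs2 himps
    have c1 : Term.evalM v t ≤ litValM v l := term_le v hlt
    have c2 : litValM v (l.1, !l.2) = -litValM v l := lit_neg_M v l
    have c3 : Term.evalM v s ≤ litValM v (l.1, !l.2) := term_le v hls
    have hchain : PropForm.evalM v φ ≤ PropForm.evalM v ψ := by
      rw [hBeqv, hattain]
      omega
    have hψneg : PropForm.evalM v ψ < 0 := by
      have : ¬ (0 < PropForm.evalM v ψ) := by rw [hψs]; simp [hψF]
      omega
    have hφneg : PropForm.evalM v φ < 0 := lt_of_le_of_lt hchain hψneg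
    rw [abs_of_neg hψneg, abs_of_neg hφneg]
    omega
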